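/- Let H be a finite-dimensional Hopf algebra over a field k with bijective antipode S. Let t ∈ H be a nonzero left integral, let α : H → k be an algebra homomorphism with t·h = α(h)·t for all h ∈ H, let Λ : H → k be a linear functional with Λ(t₁)·t₂ = 1, and set λ := Λ ∘ S. Then for all h, x ∈ H: λ(x·h) = α(h₂)·λ(S⁻²(h₁)·x); equivalently, h ⇀ λ = λ ↼ (α(h₂)·S⁻²(h₁)). -/

import Mathlib

/-!
Helper definitions for Sweedler-notation expressions in a Hopf algebra `H` over a field `k`.
-/

open TensorProduct

variable {k H : Type*} [Field k] [Ring H] [HopfAlgebra k H]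

/-- `swl f h = f(h₁) • h₂` in Sweedler notation. -/
noncomputable def swl (f : H →ₗ[k] k) : H →ₗ[k] H :=
  (TensorProduct.lid k H).toLinearMap ∘ₗ (f.rTensor H) ∘ₗ Coalgebra.comul

/-- `swr f h = f(h₂) • h₁` in Sweedler notation. -/
noncomputable def swr (f : H →ₗ[k] k) : H →ₗ[k] H :=
  (TensorProduct.rid k H).toLinearMap ∘ₗ (f.lTensor H) ∘ₗ Coalgebra.comul

/-- `sw2 f g h = f(h₁) * g(h₂)`, an element of `H`, in Sweedler notation. -/
noncomputable def sw2 (f g : H →ₗ[k] H) : H →ₗ[k] H :=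
  (LinearMap.mul' k H) ∘ₗ (TensorProduct.map f g) ∘ₗ Coalgebra.comul

/-- `sw2k f g h = f(h₁) * g(h₂)`, a scalar, in Sweedler notation. -/
noncomputable def sw2k (f g : H →ₗ[k] k) : H →ₗ[k] k :=
  (LinearMap.mul' k k) ∘ₗ (TensorProduct.map f g) ∘ₗ Coalgebra.comul

/-- `comul3 h = (h₁ ⊗ h₂) ⊗ h₃`, the iterated comultiplication `(Δ ⊗ id)Δ`. -/
noncomputable def comul3 : H →ₗ[k] (H ⊗[k] H) ⊗[k] H :=
  (LinearMap.rTensor H Coalgebra.comul) ∘ₗ Coalgebra.comul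

/-- `sw3 f g e h = f(h₁) * g(h₂) * e(h₃)`, an element of `H`, in Sweedler notation. -/
noncomputable def sw3 (f g e : H →ₗ[k] H) : H →ₗ[k] H :=
  (LinearMap.mul' k H) ∘ₗ
    (TensorProduct.map ((LinearMap.mul' k H) ∘ₗ TensorProduct.map f g) e) ∘ₗ comul3

section Aux

set_option synthInstance.maxHeartbeats 1000000
set_option maxHeartbeats 1000000

open Coalgebra HopfAlgebra

lemma sum_smul_counit_right {a : H} (r : Repr k a (H × H)) :
    ∑ i ∈ r.index, counit (R := k) (r.right i) • r.left i = a := by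
  have h := sum_tmul_counit_eq r
  apply_fun (TensorProduct.rid k H) at h
  simp only [map_sum, TensorProduct.rid_tmul, one_smul] at h
  exact h

lemma sum_counit_smul_left {a : H} (r : Repr k a (H × H)) :
    ∑ i ∈ r.index, counit (R := k) (r.left i) • r.right i = a := by
  have h := sum_counit_tmul_eq r
  apply_fun (TensorProduct.lid k H) at h
  simp only [map_sum, TensorProduct.lid_tmul, one_smul] at h
  exact h

lemma antipode_mul' (a b : H) :
    antipode (R := k) (a * b) = antipode (R := k) b * antipode (R := k) a := by
  classical
  set S : H →ₗ[k] H := antipode (R := k) (A := H) with hS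
  have ra : Repr k a (H × H) := ℛ k a
  have rb : Repr k b (H × H) := ℛ k b
  have sa : ∀ i, Repr k (ra.right i) (H × H) := fun i => ℛ k _
  have sb : ∀ j, Repr k (rb.right j) (H × H) := fun j => ℛ k _
  have ta : ∀ i, Repr k (ra.left i) (H × H) := fun i => ℛ k _
  have tb : ∀ j, Repr k (rb.left j) (H × H) := fun j => ℛ k _
  set μ₁ : (H ⊗[k] H) ⊗[k] (H ⊗[k] H) →ₗ[k] H :=
    LinearMap.mul' k H ∘ₗ (S.rTensor H) ∘ₗ LinearMap.mul' k (H ⊗[k] H) with hμ₁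
  set μ₂ : H ⊗[k] H →ₗ[k] H :=
    LinearMap.mul' k H ∘ₗ (TensorProduct.map S S) ∘ₗ (TensorProduct.comm k H H).toLinearMap
    with hμ₂
  set G : ((H ⊗[k] H) ⊗[k] H) ⊗[k] ((H ⊗[k] H) ⊗[k] H) →ₗ[k] H :=
    LinearMap.mul' k H ∘ₗ TensorProduct.map μ₁ μ₂ ∘ₗ
      (TensorProduct.tensorTensorTensorComm k (H ⊗[k] H) H (H ⊗[k] H) H).toLinearMap with hG
  have hGp : ∀ (u v w x y z : H), G (((u ⊗ₜ v) ⊗ₜ w) ⊗ₜ ((x ⊗ₜ y) ⊗ₜ z)) =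
      S (u * x) * (v * y) * (S z * S w) := by
    intro u v w x y z
    simp [hG, hμ₁, hμ₂, TensorProduct.tensorTensorTensorComm_tmul,
      Algebra.TensorProduct.tmul_mul_tmul, LinearMap.mul'_apply]
  set Za := (Coalgebra.comul (R := k) (A := H)).rTensor H (Coalgebra.comul (R := k) a) with hZa
  set Zb := (Coalgebra.comul (R := k) (A := H)).rTensor H (Coalgebra.comul (R := k) b) with hZb
  have expBa : Za = ∑ i ∈ ra.index, ∑ m ∈ (ta i).index,
      (((ta i).left m) ⊗ₜ[k] ((ta i).right m)) ⊗ₜ[k] ra.right i := by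
    rw [hZa, ← ra.eq, map_sum]
    refine Finset.sum_congr rfl fun i _ => ?_
    rw [LinearMap.rTensor_tmul, ← (ta i).eq, TensorProduct.sum_tmul]
  have expBb : Zb = ∑ j ∈ rb.index, ∑ n ∈ (tb j).index,
      (((tb j).left n) ⊗ₜ[k] ((tb j).right n)) ⊗ₜ[k] rb.right j := by
    rw [hZb, ← rb.eq, map_sum]
    refine Finset.sum_congr rfl fun j _ => ?_
    rw [LinearMap.rTensor_tmul, ← (tb j).eq, TensorProduct.sum_tmul]
  have expAa : Za = ∑ i ∈ ra.index, ∑ p ∈ (sa i).index,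
      ((ra.left i) ⊗ₜ[k] ((sa i).left p)) ⊗ₜ[k] ((sa i).right p) := by
    rw [hZa, ← coassoc_symm_apply (R := k) a, ← ra.eq, map_sum, map_sum]
    refine Finset.sum_congr rfl fun i _ => ?_
    rw [LinearMap.lTensor_tmul, ← (sa i).eq, TensorProduct.tmul_sum, map_sum]
    refine Finset.sum_congr rfl fun p _ => ?_
    rw [TensorProduct.assoc_symm_tmul]
  have expAb : Zb = ∑ j ∈ rb.index, ∑ q ∈ (sb j).index,
      ((rb.left j) ⊗ₜ[k] ((sb j).left q)) ⊗ₜ[k] ((sb j).right q) := by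
    rw [hZb, ← coassoc_symm_apply (R := k) b, ← rb.eq, map_sum, map_sum]
    refine Finset.sum_congr rfl fun j _ => ?_
    rw [LinearMap.lTensor_tmul, ← (sb j).eq, TensorProduct.tmul_sum, map_sum]
    refine Finset.sum_congr rfl fun q _ => ?_
    rw [TensorProduct.assoc_symm_tmul]
  -- first evaluation
  have evalA : G (Za ⊗ₜ[k] Zb) = S (a * b) := by
    have expand : G (Za ⊗ₜ[k] Zb) = ∑ j ∈ rb.index, ∑ q ∈ (sb j).index,
        ∑ i ∈ ra.index, ∑ p ∈ (sa i).index,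
        S (ra.left i * rb.left j) * ((sa i).left p * (sb j).left q) *
          (S ((sb j).right q) * S ((sa i).right p)) := by
      rw [expAa, expAb]
      simp only [TensorProduct.sum_tmul, TensorProduct.tmul_sum, map_sum, hGp]
    rw [expand]
    have inner : ∀ i ∈ ra.index, ∀ j ∈ rb.index,
        ∑ p ∈ (sa i).index, ∑ q ∈ (sb j).index,
          S (ra.left i * rb.left j) * ((sa i).left p * (sb j).left q) *
            (S ((sb j).right q) * S ((sa i).right p))
        = (counit (R := k) (ra.right i) * counit (R := k) (rb.right j)) •
            S (ra.left i * rb.left j) := by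
      intro i _ j _
      have h1 : ∀ p, ∑ q ∈ (sb j).index,
          S (ra.left i * rb.left j) * ((sa i).left p * (sb j).left q) *
            (S ((sb j).right q) * S ((sa i).right p))
          = counit (R := k) (rb.right j) •
              (S (ra.left i * rb.left j) * ((sa i).left p * S ((sa i).right p))) := by
        intro p
        calc ∑ q ∈ (sb j).index,
            S (ra.left i * rb.left j) * ((sa i).left p * (sb j).left q) *
              (S ((sb j).right q) * S ((sa i).right p))
            = ∑ q ∈ (sb j).index,
              ((S (ra.left i * rb.left j) * (sa i).left p) *
                ((sb j).left q * S ((sb j).right q))) * S ((sa i).right p) :=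
              Finset.sum_congr rfl fun q _ => by simp only [mul_assoc]
          _ = ((S (ra.left i * rb.left j) * (sa i).left p) *
                (∑ q ∈ (sb j).index, (sb j).left q * S ((sb j).right q))) *
                  S ((sa i).right p) := by
              rw [← Finset.sum_mul, ← Finset.mul_sum]
          _ = ((S (ra.left i * rb.left j) * (sa i).left p) *
                (counit (R := k) (rb.right j) • 1)) * S ((sa i).right p) := by
              rw [sum_mul_antipode_eq_smul (sb j)]
          _ = counit (R := k) (rb.right j) •
              (S (ra.left i * rb.left j) * ((sa i).left p * S ((sa i).right p))) := by
              rw [mul_smul_comm, mul_one, smul_mul_assoc, mul_assoc]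
      calc ∑ p ∈ (sa i).index, ∑ q ∈ (sb j).index,
          S (ra.left i * rb.left j) * ((sa i).left p * (sb j).left q) *
            (S ((sb j).right q) * S ((sa i).right p))
          = ∑ p ∈ (sa i).index, counit (R := k) (rb.right j) •
              (S (ra.left i * rb.left j) * ((sa i).left p * S ((sa i).right p))) :=
            Finset.sum_congr rfl fun p _ => h1 p
        _ = counit (R := k) (rb.right j) •
            (S (ra.left i * rb.left j) *
              ∑ p ∈ (sa i).index, (sa i).left p * S ((sa i).right p)) := by
            rw [← Finset.smul_sum, ← Finset.mul_sum]
        _ = counit (R := k) (rb.right j) •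
            (S (ra.left i * rb.left j) * (counit (R := k) (ra.right i) • 1)) := by
            rw [sum_mul_antipode_eq_smul (sa i)]
        _ = (counit (R := k) (ra.right i) * counit (R := k) (rb.right j)) •
            S (ra.left i * rb.left j) := by
            rw [mul_smul_comm, mul_one, smul_smul, mul_comm]
    have hab : S (a * b) = ∑ i ∈ ra.index, ∑ j ∈ rb.index,
        (counit (R := k) (ra.right i) * counit (R := k) (rb.right j)) •
          S (ra.left i * rb.left j) := by
      conv_lhs => rw [← sum_smul_counit_right ra, ← sum_smul_counit_right rb,
        Finset.sum_mul_sum]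
      rw [map_sum]
      refine Finset.sum_congr rfl fun i _ => ?_
      rw [map_sum]
      refine Finset.sum_congr rfl fun j _ => ?_
      rw [smul_mul_assoc, mul_smul_comm, map_smul, map_smul, smul_smul]
    rw [hab]
    conv_rhs => rw [Finset.sum_comm]
    refine Finset.sum_congr rfl fun j hj => ?_
    rw [Finset.sum_comm]
    refine Finset.sum_congr rfl fun i hi => ?_
    rw [Finset.sum_comm]
    exact inner i hi j hj
  -- second evaluation
  have evalB : G (Za ⊗ₜ[k] Zb) = S b * S a := by
    have expand : G (Za ⊗ₜ[k] Zb) = ∑ j ∈ rb.index, ∑ n ∈ (tb j).index,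
        ∑ i ∈ ra.index, ∑ m ∈ (ta i).index,
        S ((ta i).left m * (tb j).left n) * ((ta i).right m * (tb j).right n) *
          (S (rb.right j) * S (ra.right i)) := by
      rw [expBa, expBb]
      simp only [TensorProduct.sum_tmul, TensorProduct.tmul_sum, map_sum, hGp]
    rw [expand]
    have inner : ∀ i ∈ ra.index, ∀ j ∈ rb.index,
        ∑ m ∈ (ta i).index, ∑ n ∈ (tb j).index,
          S ((ta i).left m * (tb j).left n) * ((ta i).right m * (tb j).right n) *
            (S (rb.right j) * S (ra.right i))
        = (counit (R := k) (ra.left i) * counit (R := k) (rb.left j)) •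
            (S (rb.right j) * S (ra.right i)) := by
      intro i _ j _
      have key : ∑ m ∈ (ta i).index, ∑ n ∈ (tb j).index,
          S ((ta i).left m * (tb j).left n) * ((ta i).right m * (tb j).right n)
          = (counit (R := k) (ra.left i) * counit (R := k) (rb.left j)) • 1 := by
        have hcm : Coalgebra.comul (R := k) (ra.left i * rb.left j)
            = ∑ m ∈ (ta i).index, ∑ n ∈ (tb j).index,
              ((ta i).left m * (tb j).left n) ⊗ₜ[k] ((ta i).right m * (tb j).right n) := by
          rw [Bialgebra.comul_mul, ← (ta i).eq, ← (tb j).eq, Finset.sum_mul_sum]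
          simp only [Algebra.TensorProduct.tmul_mul_tmul]
        calc ∑ m ∈ (ta i).index, ∑ n ∈ (tb j).index,
            S ((ta i).left m * (tb j).left n) * ((ta i).right m * (tb j).right n)
            = LinearMap.mul' k H ((S.rTensor H)
                (Coalgebra.comul (R := k) (ra.left i * rb.left j))) := by
              rw [hcm]
              simp only [map_sum, LinearMap.rTensor_tmul, LinearMap.mul'_apply]
          _ = algebraMap k H (counit (R := k) (ra.left i * rb.left j)) :=
              mul_antipode_rTensor_comul_apply _
          _ = (counit (R := k) (ra.left i) * counit (R := k) (rb.left j)) • 1 := by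
              rw [Bialgebra.counit_mul, Algebra.algebraMap_eq_smul_one]
      calc ∑ m ∈ (ta i).index, ∑ n ∈ (tb j).index,
          S ((ta i).left m * (tb j).left n) * ((ta i).right m * (tb j).right n) *
            (S (rb.right j) * S (ra.right i))
          = (∑ m ∈ (ta i).index, ∑ n ∈ (tb j).index,
              S ((ta i).left m * (tb j).left n) * ((ta i).right m * (tb j).right n)) *
              (S (rb.right j) * S (ra.right i)) := by
            rw [Finset.sum_mul]
            refine Finset.sum_congr rfl fun m _ => ?_
            rw [Finset.sum_mul]
        _ = ((counit (R := k) (ra.left i) * counit (R := k) (rb.left j)) • 1) *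
              (S (rb.right j) * S (ra.right i)) := by rw [key]
        _ = (counit (R := k) (ra.left i) * counit (R := k) (rb.left j)) •
              (S (rb.right j) * S (ra.right i)) := by rw [smul_mul_assoc, one_mul]
    have hba : S b * S a = ∑ i ∈ ra.index, ∑ j ∈ rb.index,
        (counit (R := k) (ra.left i) * counit (R := k) (rb.left j)) •
          (S (rb.right j) * S (ra.right i)) := by
      conv_lhs => rw [← sum_counit_smul_left ra, ← sum_counit_smul_left rb]
      rw [map_sum, map_sum, Finset.sum_mul_sum, Finset.sum_comm]
      refine Finset.sum_congr rfl fun i _ => ?_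
      refine Finset.sum_congr rfl fun j _ => ?_
      rw [map_smul, map_smul, smul_mul_assoc, mul_smul_comm, smul_smul, mul_comm]
    rw [hba]
    conv_rhs => rw [Finset.sum_comm]
    refine Finset.sum_congr rfl fun j hj => ?_
    rw [Finset.sum_comm]
    refine Finset.sum_congr rfl fun i hi => ?_
    rw [Finset.sum_comm]
    exact inner i hi j hj
  rw [← evalA, evalB]

lemma antipode_one' : antipode (R := k) (1 : H) = 1 := by
  have h := mul_antipode_rTensor_comul_apply (R := k) (1 : H)
  simpa [Bialgebra.comul_one, Algebra.TensorProduct.one_def] using h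

/-- `∑ a₂ * S⁻¹(a₁) = ε(a) 1`. -/
lemma sum_right_mul_sinv {a : H} (r : Repr k a (H × H))
    (S' : H →ₗ[k] H)
    (hS'l : ∀ x : H, S' (HopfAlgebra.antipode (R := k) x) = x)
    (hS'r : ∀ x : H, HopfAlgebra.antipode (R := k) (S' x) = x) :
    ∑ i ∈ r.index, r.right i * S' (r.left i) = counit (R := k) a • 1 := by
  have hinj : Function.Injective (antipode (R := k) (A := H)) :=
    Function.LeftInverse.injective hS'l
  apply hinj
  rw [map_sum, map_smul, antipode_one']
  have : ∀ i ∈ r.index, antipode (R := k) (r.right i * S' (r.left i))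
      = r.left i * antipode (R := k) (r.right i) := by
    intro i _
    rw [antipode_mul', hS'r]
  rw [Finset.sum_congr rfl this, sum_mul_antipode_eq_smul r]

/-- `∑ S(a₁) a₂ ⊗ a₃ = 1 ⊗ a`, phrased via `comul` on the right leg. -/
lemma claimC {a : H} (r : Repr k a (H × H)) :
    ∑ i ∈ r.index, ((antipode (R := k) (r.left i)) ⊗ₜ[k] (1 : H)) *
      (Coalgebra.comul (R := k) (r.right i)) = (1 : H) ⊗ₜ[k] a := by
  classical
  set S : H →ₗ[k] H := antipode (R := k) (A := H) with hS
  have a₁ : ∀ i, Repr k (r.left i) (H × H) := fun i => ℛ k _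
  have a₂ : ∀ i, Repr k (r.right i) (H × H) := fun i => ℛ k _
  set Ψ : H ⊗[k] (H ⊗[k] H) →ₗ[k] H ⊗[k] H :=
    ((LinearMap.mul' k H).rTensor H) ∘ₗ (TensorProduct.assoc k H H H).symm.toLinearMap ∘ₗ
      (S.rTensor (H ⊗[k] H)) with hΨ
  have hΨp : ∀ x y z : H, Ψ (x ⊗ₜ (y ⊗ₜ z)) = (S x * y) ⊗ₜ[k] z := by
    intro x y z
    simp [hΨ, TensorProduct.assoc_symm_tmul, LinearMap.mul'_apply]
  have key := sum_tmul_tmul_eq r a₁ a₂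
  apply_fun Ψ at key
  simp only [map_sum, hΨp] at key
  have lhs : ∑ i ∈ r.index, ∑ j ∈ (a₁ i).index,
      (S ((a₁ i).left j) * (a₁ i).right j) ⊗ₜ[k] r.right i = (1 : H) ⊗ₜ[k] a := by
    calc ∑ i ∈ r.index, ∑ j ∈ (a₁ i).index,
        (S ((a₁ i).left j) * (a₁ i).right j) ⊗ₜ[k] r.right i
        = ∑ i ∈ r.index, (∑ j ∈ (a₁ i).index,
            S ((a₁ i).left j) * (a₁ i).right j) ⊗ₜ[k] r.right i := by
          refine Finset.sum_congr rfl fun i _ => ?_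
          rw [TensorProduct.sum_tmul]
      _ = ∑ i ∈ r.index, (counit (R := k) (r.left i) • (1 : H)) ⊗ₜ[k] r.right i := by
          refine Finset.sum_congr rfl fun i _ => ?_
          rw [sum_antipode_mul_eq_smul (a₁ i)]
      _ = (1 : H) ⊗ₜ[k] ∑ i ∈ r.index, counit (R := k) (r.left i) • r.right i := by
          rw [TensorProduct.tmul_sum]
          refine Finset.sum_congr rfl fun i _ => ?_
          rw [TensorProduct.smul_tmul, TensorProduct.tmul_smul]
      _ = (1 : H) ⊗ₜ[k] a := by rw [sum_counit_smul_left r]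
  calc ∑ i ∈ r.index, ((S (r.left i)) ⊗ₜ[k] (1 : H)) * (Coalgebra.comul (R := k) (r.right i))
      = ∑ i ∈ r.index, ∑ j ∈ (a₂ i).index,
          (S (r.left i) * (a₂ i).left j) ⊗ₜ[k] (a₂ i).right j := by
        refine Finset.sum_congr rfl fun i _ => ?_
        rw [← (a₂ i).eq, Finset.mul_sum]
        refine Finset.sum_congr rfl fun j _ => ?_
        rw [Algebra.TensorProduct.tmul_mul_tmul, one_mul]
    _ = (1 : H) ⊗ₜ[k] a := by rw [← key, lhs]

/-- `∑ a₂ S⁻¹(a₁) ⊗ a₃ = 1 ⊗ a`, phrased via `comul` on the right leg. -/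
lemma claimE {a : H} (r : Repr k a (H × H))
    (S' : H →ₗ[k] H)
    (hS'l : ∀ x : H, S' (HopfAlgebra.antipode (R := k) x) = x)
    (hS'r : ∀ x : H, HopfAlgebra.antipode (R := k) (S' x) = x) :
    ∑ i ∈ r.index, (Coalgebra.comul (R := k) (r.right i)) *
      ((S' (r.left i)) ⊗ₜ[k] (1 : H)) = (1 : H) ⊗ₜ[k] a := by
  classical
  have a₁ : ∀ i, Repr k (r.left i) (H × H) := fun i => ℛ k _
  have a₂ : ∀ i, Repr k (r.right i) (H × H) := fun i => ℛ k _
  set Θ : H ⊗[k] (H ⊗[k] H) →ₗ[k] H ⊗[k] H :=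
    (((LinearMap.mul' k H) ∘ₗ (TensorProduct.comm k H H).toLinearMap).rTensor H) ∘ₗ
      (TensorProduct.assoc k H H H).symm.toLinearMap ∘ₗ (S'.rTensor (H ⊗[k] H)) with hΘ
  have hΘp : ∀ x y z : H, Θ (x ⊗ₜ (y ⊗ₜ z)) = (y * S' x) ⊗ₜ[k] z := by
    intro x y z
    simp [hΘ, TensorProduct.assoc_symm_tmul, LinearMap.mul'_apply]
  have key := sum_tmul_tmul_eq r a₁ a₂
  apply_fun Θ at key
  simp only [map_sum, hΘp] at key
  have lhs : ∑ i ∈ r.index, ∑ j ∈ (a₁ i).index,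
      ((a₁ i).right j * S' ((a₁ i).left j)) ⊗ₜ[k] r.right i = (1 : H) ⊗ₜ[k] a := by
    calc ∑ i ∈ r.index, ∑ j ∈ (a₁ i).index,
        ((a₁ i).right j * S' ((a₁ i).left j)) ⊗ₜ[k] r.right i
        = ∑ i ∈ r.index, (∑ j ∈ (a₁ i).index,
            (a₁ i).right j * S' ((a₁ i).left j)) ⊗ₜ[k] r.right i := by
          refine Finset.sum_congr rfl fun i _ => ?_
          rw [TensorProduct.sum_tmul]
      _ = ∑ i ∈ r.index, (counit (R := k) (r.left i) • (1 : H)) ⊗ₜ[k] r.right i := by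
          refine Finset.sum_congr rfl fun i _ => ?_
          rw [sum_right_mul_sinv (a₁ i) S' hS'l hS'r]
      _ = (1 : H) ⊗ₜ[k] ∑ i ∈ r.index, counit (R := k) (r.left i) • r.right i := by
          rw [TensorProduct.tmul_sum]
          refine Finset.sum_congr rfl fun i _ => ?_
          rw [TensorProduct.smul_tmul, TensorProduct.tmul_smul]
      _ = (1 : H) ⊗ₜ[k] a := by rw [sum_counit_smul_left r]
  calc ∑ i ∈ r.index, (Coalgebra.comul (R := k) (r.right i)) * ((S' (r.left i)) ⊗ₜ[k] (1 : H))
      = ∑ i ∈ r.index, ∑ j ∈ (a₂ i).index,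
          ((a₂ i).left j * S' (r.left i)) ⊗ₜ[k] (a₂ i).right j := by
        refine Finset.sum_congr rfl fun i _ => ?_
        rw [← (a₂ i).eq, Finset.sum_mul]
        refine Finset.sum_congr rfl fun j _ => ?_
        rw [Algebra.TensorProduct.tmul_mul_tmul, mul_one]
    _ = (1 : H) ⊗ₜ[k] a := by rw [← key, lhs]

lemma swl_repr (f : H →ₗ[k] k) {a : H} (r : Repr k a (H × H)) :
    swl f a = ∑ i ∈ r.index, f (r.left i) • r.right i := by
  simp only [swl, LinearMap.comp_apply, ← r.eq, map_sum, LinearMap.rTensor_tmul,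
    LinearEquiv.coe_coe, TensorProduct.lid_tmul]

lemma swr_repr (f : H →ₗ[k] k) {a : H} (r : Repr k a (H × H)) :
    swr f a = ∑ i ∈ r.index, f (r.right i) • r.left i := by
  simp only [swr, LinearMap.comp_apply, ← r.eq, map_sum, LinearMap.lTensor_tmul,
    LinearEquiv.coe_coe, TensorProduct.rid_tmul]

lemma sw2k_repr (f g : H →ₗ[k] k) {a : H} (r : Repr k a (H × H)) :
    sw2k f g a = ∑ i ∈ r.index, f (r.left i) * g (r.right i) := by
  simp only [sw2k, LinearMap.comp_apply, ← r.eq, map_sum, TensorProduct.map_tmul,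
    LinearMap.mul'_apply]

end Aux

/-- `H` finite-dimensional Hopf algebra over `k` with bijective antipode
`S` (linear inverse `S'`), `t ≠ 0` a left integral, `α : H → k` an algebra map with
`t·h = α(h)·t`, `Λ : H → k` with `Λ(t₁)·t₂ = 1`, and `λ := Λ ∘ S`.  Then for all `h, x`:
`λ(x·h) = α(h₂)·λ(S⁻²(h₁)·x)`. -/
theorem statement4 [FiniteDimensional k H]
    (S' : H →ₗ[k] H)
    (hS'l : ∀ x : H, S' (HopfAlgebra.antipode (R := k) x) = x)
    (hS'r : ∀ x : H, HopfAlgebra.antipode (R := k) (S' x) = x)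
    (t : H) (ht0 : t ≠ 0)
    (htl : ∀ h : H, h * t = Coalgebra.counit (R := k) h • t)
    (α : H →ₐ[k] k) (hα : ∀ h : H, t * h = α h • t)
    (Λ : H →ₗ[k] k) (hΛ : swl Λ t = 1) :
    ∀ h x : H,
      (Λ ∘ₗ HopfAlgebra.antipode (R := k)) (x * h) =
        sw2k ((Λ ∘ₗ HopfAlgebra.antipode (R := k)) ∘ₗ (LinearMap.mulRight k x) ∘ₗ S' ∘ₗ S')
          α.toLinearMap h := by
  classical
  intro h x
  set S : H →ₗ[k] H := HopfAlgebra.antipode (R := k) (A := H) with hS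
  set T := Coalgebra.comul (R := k) t with hT
  have rt : Coalgebra.Repr k t (H × H) := Coalgebra.Repr.arbitrary k t
  -- the Frobenius-type map P
  set P : (H →ₗ[k] k) →ₗ[k] H :=
    { toFun := fun f => swl f t
      map_add' := fun f g => by
        simp only [swl, LinearMap.comp_apply, LinearMap.rTensor, TensorProduct.map_add_left,
          LinearMap.add_apply, map_add]
      map_smul' := fun c f => by
        simp only [swl, LinearMap.comp_apply, LinearMap.rTensor, TensorProduct.map_smul_left,
          LinearMap.smul_apply, map_smul, RingHom.id_apply] } with hP
  have hPapp : ∀ f : H →ₗ[k] k, P f = swl f t := fun f => rfl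
  -- claim B : (1 ⊗ h) Δt = (S h ⊗ 1) Δt
  have claimB : ∀ z : H, ((1 : H) ⊗ₜ[k] z) * T = (S z ⊗ₜ[k] (1 : H)) * T := by
    intro z
    have rz : Coalgebra.Repr k z (H × H) := Coalgebra.Repr.arbitrary k z
    have e1 : ∑ i ∈ rz.index, ((S (rz.left i)) ⊗ₜ[k] (1 : H)) *
        Coalgebra.comul (R := k) (rz.right i * t) = ((1 : H) ⊗ₜ[k] z) * T := by
      calc ∑ i ∈ rz.index, ((S (rz.left i)) ⊗ₜ[k] (1 : H)) *
          Coalgebra.comul (R := k) (rz.right i * t)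
          = ∑ i ∈ rz.index, (((S (rz.left i)) ⊗ₜ[k] (1 : H)) *
              Coalgebra.comul (R := k) (rz.right i)) * T := by
            refine Finset.sum_congr rfl fun i _ => ?_
            rw [Bialgebra.comul_mul, mul_assoc]
        _ = (∑ i ∈ rz.index, ((S (rz.left i)) ⊗ₜ[k] (1 : H)) *
              Coalgebra.comul (R := k) (rz.right i)) * T := by rw [Finset.sum_mul]
        _ = ((1 : H) ⊗ₜ[k] z) * T := by rw [claimC rz]
    have e2 : ∑ i ∈ rz.index, ((S (rz.left i)) ⊗ₜ[k] (1 : H)) *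
        Coalgebra.comul (R := k) (rz.right i * t) = (S z ⊗ₜ[k] (1 : H)) * T := by
      calc ∑ i ∈ rz.index, ((S (rz.left i)) ⊗ₜ[k] (1 : H)) *
          Coalgebra.comul (R := k) (rz.right i * t)
          = ∑ i ∈ rz.index, (Coalgebra.counit (R := k) (rz.right i) •
              ((S (rz.left i)) ⊗ₜ[k] (1 : H))) * T := by
            refine Finset.sum_congr rfl fun i _ => ?_
            rw [htl, map_smul, mul_smul_comm, smul_mul_assoc]
        _ = ((∑ i ∈ rz.index, Coalgebra.counit (R := k) (rz.right i) •
              (S (rz.left i))) ⊗ₜ[k] (1 : H)) * T := by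
            rw [← Finset.sum_mul, TensorProduct.sum_tmul]
            try congr 1
            try exact Finset.sum_congr rfl fun i _ => TensorProduct.smul_tmul' _ _ _
        _ = (S z ⊗ₜ[k] (1 : H)) * T := by
            congr 2
            calc ∑ i ∈ rz.index, Coalgebra.counit (R := k) (rz.right i) • S (rz.left i)
                = S (∑ i ∈ rz.index, Coalgebra.counit (R := k) (rz.right i) • rz.left i) := by
                  rw [map_sum]
                  exact Finset.sum_congr rfl fun i _ => (map_smul S _ _).symm
              _ = S z := by rw [sum_smul_counit_right rz]
    rw [← e1, e2]
  -- element w = S'(α(h₂) • h₁)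
  set w : H := S' (swr α.toLinearMap h) with hw
  have rh : Coalgebra.Repr k h (H × H) := Coalgebra.Repr.arbitrary k h
  have hwsum : w = ∑ i ∈ rh.index, α (rh.right i) • S' (rh.left i) := by
    rw [hw, swr_repr α.toLinearMap rh, map_sum]
    exact Finset.sum_congr rfl fun i _ => map_smul S' _ _
  -- claim D : Δt (w ⊗ 1) = Δt (1 ⊗ h)
  have claimD : T * (w ⊗ₜ[k] (1 : H)) = T * ((1 : H) ⊗ₜ[k] h) := by
    have e1 : ∑ i ∈ rh.index, Coalgebra.comul (R := k) (t * rh.right i) *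
        ((S' (rh.left i)) ⊗ₜ[k] (1 : H)) = T * (w ⊗ₜ[k] (1 : H)) := by
      calc ∑ i ∈ rh.index, Coalgebra.comul (R := k) (t * rh.right i) *
          ((S' (rh.left i)) ⊗ₜ[k] (1 : H))
          = ∑ i ∈ rh.index, T * (α (rh.right i) • ((S' (rh.left i)) ⊗ₜ[k] (1 : H))) := by
            refine Finset.sum_congr rfl fun i _ => ?_
            rw [hα, map_smul, smul_mul_assoc, mul_smul_comm]
        _ = T * (∑ i ∈ rh.index, α (rh.right i) • ((S' (rh.left i)) ⊗ₜ[k] (1 : H))) := by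
            rw [Finset.mul_sum]
        _ = T * (w ⊗ₜ[k] (1 : H)) := by
            rw [hwsum, TensorProduct.sum_tmul]
            try congr 1
            try exact Finset.sum_congr rfl fun i _ => TensorProduct.smul_tmul' _ _ _
    have e2 : ∑ i ∈ rh.index, Coalgebra.comul (R := k) (t * rh.right i) *
        ((S' (rh.left i)) ⊗ₜ[k] (1 : H)) = T * ((1 : H) ⊗ₜ[k] h) := by
      calc ∑ i ∈ rh.index, Coalgebra.comul (R := k) (t * rh.right i) *
          ((S' (rh.left i)) ⊗ₜ[k] (1 : H))
          = ∑ i ∈ rh.index, T * (Coalgebra.comul (R := k) (rh.right i) *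
              ((S' (rh.left i)) ⊗ₜ[k] (1 : H))) := by
            refine Finset.sum_congr rfl fun i _ => ?_
            rw [Bialgebra.comul_mul, mul_assoc]
        _ = T * ∑ i ∈ rh.index, Coalgebra.comul (R := k) (rh.right i) *
              ((S' (rh.left i)) ⊗ₜ[k] (1 : H)) := by rw [Finset.mul_sum]
        _ = T * ((1 : H) ⊗ₜ[k] h) := by rw [claimE rh S' hS'l hS'r]
    rw [← e1, e2]
  -- evaluation map  x ⊗ y ↦ Λ(x) • y
  set ev : H ⊗[k] H →ₗ[k] H :=
    (TensorProduct.lid k H).toLinearMap ∘ₗ Λ.rTensor H with hev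
  have hevp : ∀ u v : H, ev (u ⊗ₜ[k] v) = Λ u • v := by
    intro u v
    simp [hev]
  have hone : ∑ i ∈ rt.index, Λ (rt.left i) • rt.right i = 1 := by
    rw [← swl_repr Λ rt, hΛ]
  have tmt : ∀ (a b c d : H), (a ⊗ₜ[k] b) * (c ⊗ₜ[k] d) = (a * c) ⊗ₜ[k] (b * d) := by
    intro a b c d
    rw [Algebra.TensorProduct.tmul_mul_tmul]
  -- P (Λ ∘ mulLeft (S z)) = z
  have hPf : ∀ z : H, P (Λ ∘ₗ LinearMap.mulLeft k (S z)) = z := by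
    intro z
    have hB := congrArg ev (claimB z)
    rw [hT] at hB
    rw [← rt.eq] at hB
    rw [Finset.mul_sum, Finset.mul_sum, map_sum, map_sum] at hB
    simp only [tmt, one_mul, mul_one, hevp] at hB
    calc P (Λ ∘ₗ LinearMap.mulLeft k (S z))
        = ∑ i ∈ rt.index, Λ (S z * rt.left i) • rt.right i := by
          rw [hPapp, swl_repr _ rt]
          exact Finset.sum_congr rfl fun i _ => by
            rw [LinearMap.comp_apply, LinearMap.mulLeft_apply]
      _ = ∑ i ∈ rt.index, Λ (rt.left i) • (z * rt.right i) := hB.symm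
      _ = z * ∑ i ∈ rt.index, Λ (rt.left i) • rt.right i := by
          rw [Finset.mul_sum]
          exact Finset.sum_congr rfl fun i _ => (mul_smul_comm _ _ _).symm
      _ = z := by rw [hone, mul_one]
  -- P (Λ ∘ mulRight w) = h
  have hPf' : P (Λ ∘ₗ LinearMap.mulRight k w) = h := by
    have hD := congrArg ev claimD
    rw [hT] at hD
    rw [← rt.eq] at hD
    rw [Finset.sum_mul, Finset.sum_mul, map_sum, map_sum] at hD
    simp only [tmt, one_mul, mul_one, hevp] at hD
    calc P (Λ ∘ₗ LinearMap.mulRight k w)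
        = ∑ i ∈ rt.index, Λ (rt.left i * w) • rt.right i := by
          rw [hPapp, swl_repr _ rt]
          exact Finset.sum_congr rfl fun i _ => by
            rw [LinearMap.comp_apply, LinearMap.mulRight_apply]
      _ = ∑ i ∈ rt.index, Λ (rt.left i) • (rt.right i * h) := hD
      _ = (∑ i ∈ rt.index, Λ (rt.left i) • rt.right i) * h := by
          rw [Finset.sum_mul]
          exact Finset.sum_congr rfl fun i _ => (smul_mul_assoc _ _ _).symm
      _ = h := by rw [hone, one_mul]
  -- P is injective
  have hsurj : Function.Surjective P := fun z => ⟨Λ ∘ₗ LinearMap.mulLeft k (S z), hPf z⟩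
  have hinj : Function.Injective P :=
    (LinearMap.injective_iff_surjective_of_finrank_eq_finrank
      (Subspace.dual_finrank_eq (V := H))).mpr hsurj
  have feq : (Λ ∘ₗ LinearMap.mulLeft k (S h)) = (Λ ∘ₗ LinearMap.mulRight k w) :=
    hinj (by rw [hPf h, hPf'])
  -- final assembly
  have lhs : (Λ ∘ₗ HopfAlgebra.antipode (R := k)) (x * h) = Λ (S x * w) := by
    calc (Λ ∘ₗ HopfAlgebra.antipode (R := k)) (x * h)
        = Λ (S h * S x) := by rw [LinearMap.comp_apply, antipode_mul', ← hS]
      _ = (Λ ∘ₗ LinearMap.mulLeft k (S h)) (S x) := by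
          rw [LinearMap.comp_apply, LinearMap.mulLeft_apply]
      _ = (Λ ∘ₗ LinearMap.mulRight k w) (S x) := by rw [feq]
      _ = Λ (S x * w) := by rw [LinearMap.comp_apply, LinearMap.mulRight_apply]
  have rhs : sw2k ((Λ ∘ₗ HopfAlgebra.antipode (R := k)) ∘ₗ (LinearMap.mulRight k x) ∘ₗ S' ∘ₗ S')
      α.toLinearMap h = Λ (S x * w) := by
    rw [sw2k_repr _ _ rh]
    calc ∑ i ∈ rh.index,
          ((Λ ∘ₗ HopfAlgebra.antipode (R := k)) ∘ₗ (LinearMap.mulRight k x) ∘ₗ S' ∘ₗ S')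
            (rh.left i) * α.toLinearMap (rh.right i)
        = ∑ i ∈ rh.index, Λ (S (S' (S' (rh.left i)) * x)) * α (rh.right i) := by
          refine Finset.sum_congr rfl fun i _ => ?_
          rfl
      _ = ∑ i ∈ rh.index, α (rh.right i) • Λ (S x * S' (rh.left i)) := by
          refine Finset.sum_congr rfl fun i _ => ?_
          rw [hS, antipode_mul', ← hS, hS'r, smul_eq_mul]
          exact mul_comm _ _
      _ = Λ (S x * ∑ i ∈ rh.index, α (rh.right i) • S' (rh.left i)) := by
          rw [Finset.mul_sum, map_sum]
          refine Finset.sum_congr rfl fun i _ => ?_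
          rw [mul_smul_comm, map_smul]
      _ = Λ (S x * w) := by rw [← hwsum]
  rw [lhs, rhs]
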